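/- Let H be a finite-dimensional Hilbert space and T₁, T₂, T₃ ∈ B(H) with 0 ≤ T₁T₁* + T₂T₂* − T₃T₃* ≤ I, and T the positive square root. Then for every u ∈ ran T there exist z₁, z₂, z₃ ∈ H such that T₁z₁ + T₂z₂ − T₃z₃ = u and ‖z₁‖² + ‖z₂‖² − ‖z₃‖² = ‖u‖²_{M(T)}. -/

import Mathlib

set_option synthInstance.maxHeartbeats 800000
set_option maxHeartbeats 1000000

open ContinuousLinearMap

/-- In finite dimensions, every `u ∈ ran T` is of the form `T₁z₁ + T₂z₂ − T₃z₃` with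
`‖z₁‖² + ‖z₂‖² − ‖z₃‖² = ‖u‖²_{M(T)}`. -/
theorem finite_dim_indefinite_range {H : Type*} [NormedAddCommGroup H] [InnerProductSpace ℂ H]
    [FiniteDimensional ℂ H] (T₁ T₂ T₃ : H →L[ℂ] H)
    (hpos : (T₁ ∘L adjoint T₁ + T₂ ∘L adjoint T₂ - T₃ ∘L adjoint T₃).IsPositive)
    (hcontr : (1 - (T₁ ∘L adjoint T₁ + T₂ ∘L adjoint T₂ - T₃ ∘L adjoint T₃)).IsPositive)
    (T : H →L[ℂ] H)
    (hT : T = CFC.sqrt (T₁ ∘L adjoint T₁ + T₂ ∘L adjoint T₂ - T₃ ∘L adjoint T₃))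
    (u : H) (hu : u ∈ Set.range T) :
    ∃ z₁ z₂ z₃ : H, T₁ z₁ + T₂ z₂ - T₃ z₃ = u ∧
      ‖z₁‖ ^ 2 + ‖z₂‖ ^ 2 - ‖z₃‖ ^ 2 = (sInf {r : ℝ | ∃ y : H, T y = u ∧ r = ‖y‖}) ^ 2 := by
  set A := T₁ ∘L adjoint T₁ + T₂ ∘L adjoint T₂ - T₃ ∘L adjoint T₃ with hAdef
  have hApos : (0 : H →L[ℂ] H) ≤ A := (nonneg_iff_isPositive A).2 hpos
  have hTpos : T.IsPositive := by
    rw [hT, ← nonneg_iff_isPositive]; exact CFC.sqrt_nonneg _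
  have hTsa : IsSelfAdjoint T := hTpos.isSelfAdjoint
  have hTT : T * T = A := by
    rw [hT]; exact CFC.sqrt_mul_sqrt_self A hApos
  have hTTapp : ∀ x, T (T x) = A x := fun x => by
    rw [← hTT]; rfl
  have hTsym : ∀ x y : H, (inner ℂ (T x) y : ℂ) = inner ℂ x (T y) := fun x y => by
    conv_lhs => rw [← hTsa.adjoint_eq]
    exact adjoint_inner_left T y x
  have hker : LinearMap.ker (A : H →ₗ[ℂ] H) = LinearMap.ker (T : H →ₗ[ℂ] H) := by
    ext x
    simp only [LinearMap.mem_ker, ContinuousLinearMap.coe_coe]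
    constructor
    · intro hx
      have h0 : (inner ℂ (T x) (T x) : ℂ) = 0 := by
        rw [hTsym, hTTapp, hx, inner_zero_right]
      simpa using inner_self_eq_zero.mp h0
    · intro hx
      rw [← hTTapp, hx, map_zero]
  have hrange : LinearMap.range (A : H →ₗ[ℂ] H) = LinearMap.range (T : H →ₗ[ℂ] H) := by
    apply Submodule.eq_of_le_of_finrank_eq
    · rintro _ ⟨x, rfl⟩
      exact ⟨T x, hTTapp x⟩
    · have h1 := LinearMap.finrank_range_add_finrank_ker (A : H →ₗ[ℂ] H)
      have h2 := LinearMap.finrank_range_add_finrank_ker (T : H →ₗ[ℂ] H)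
      have hk : LinearMap.ker (A : H →ₗ[ℂ] H) = LinearMap.ker (T : H →ₗ[ℂ] H) := by
        simpa using hker
      have hr1 : LinearMap.range (A : H →ₗ[ℂ] H) = LinearMap.range (A : H →ₗ[ℂ] H) := by
        ext z; simp
      have hr2 : LinearMap.range (T : H →ₗ[ℂ] H) = LinearMap.range (T : H →ₗ[ℂ] H) := by
        ext z; simp
      rw [hr1] at h1; rw [hr2] at h2; rw [hk] at h1
      omega
  obtain ⟨v, hv⟩ := hu
  have huA : u ∈ LinearMap.range (A : H →ₗ[ℂ] H) := by
    rw [hrange]; exact ⟨v, hv⟩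
  obtain ⟨w, hw'⟩ : ∃ w, A w = u := huA
  refine ⟨adjoint T₁ w, adjoint T₂ w, adjoint T₃ w, ?_, ?_⟩
  · have : T₁ (adjoint T₁ w) + T₂ (adjoint T₂ w) - T₃ (adjoint T₃ w) = A w := by
      simp [hAdef, ContinuousLinearMap.sub_apply, ContinuousLinearMap.add_apply,
        ContinuousLinearMap.comp_apply]
    rw [this]; exact hw'
  · set y := T w with hy
    have hTy : T y = u := by rw [hy, hTTapp]; exact hw'
    have hnorm1 : ∀ S : H →L[ℂ] H,
        ‖adjoint S w‖ ^ 2 = RCLike.re (inner ℂ (S (adjoint S w)) w : ℂ) := by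
      intro S
      rw [← inner_self_eq_norm_sq (𝕜 := ℂ) (adjoint S w), adjoint_inner_right]
    have hsum : ‖adjoint T₁ w‖ ^ 2 + ‖adjoint T₂ w‖ ^ 2 - ‖adjoint T₃ w‖ ^ 2
        = RCLike.re (inner ℂ u w : ℂ) := by
      rw [hnorm1 T₁, hnorm1 T₂, hnorm1 T₃, ← hw']
      have h : (inner ℂ (A w) w : ℂ) = inner ℂ (T₁ (adjoint T₁ w)) w + inner ℂ (T₂ (adjoint T₂ w)) w
          - inner ℂ (T₃ (adjoint T₃ w)) w := by
        simp only [hAdef, ContinuousLinearMap.sub_apply, ContinuousLinearMap.add_apply,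
          ContinuousLinearMap.comp_apply, inner_add_left, inner_sub_left]
      rw [h, map_sub, map_add]
    have hyn : RCLike.re (inner ℂ u w : ℂ) = ‖y‖ ^ 2 := by
      rw [← hTy, hy, ← inner_self_eq_norm_sq (𝕜 := ℂ) (T w)]
      congr 1
      rw [hTsym]
    rw [hsum, hyn]
    have hmem : ‖y‖ ∈ {r : ℝ | ∃ y' : H, T y' = u ∧ r = ‖y'‖} := ⟨y, hTy, rfl⟩
    have hlb : ∀ r ∈ {r : ℝ | ∃ y' : H, T y' = u ∧ r = ‖y'‖}, ‖y‖ ≤ r := by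
      rintro r ⟨y', hy', rfl⟩
      have horth : (inner ℂ y (y' - y) : ℂ) = 0 := by
        rw [hy, hTsym, map_sub, hy']
        rw [show T (T w) = u from by rw [hTTapp]; exact hw']
        simp
      have hsq : ‖y'‖ ^ 2 = ‖y‖ ^ 2 + ‖y' - y‖ ^ 2 := by
        have h := norm_add_sq (𝕜 := ℂ) y (y' - y)
        rw [show y + (y' - y) = y' from by abel] at h
        rw [h, show RCLike.re (inner ℂ y (y' - y) : ℂ) = 0 from by rw [horth]; simp]
        ring
      nlinarith [norm_nonneg y, norm_nonneg y', sq_nonneg (‖y' - y‖)]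
    have hbdd : BddBelow {r : ℝ | ∃ y' : H, T y' = u ∧ r = ‖y'‖} :=
      ⟨0, by rintro r ⟨y', _, rfl⟩; exact norm_nonneg _⟩
    have hInf : sInf {r : ℝ | ∃ y' : H, T y' = u ∧ r = ‖y'‖} = ‖y‖ :=
      le_antisymm (csInf_le hbdd hmem) (le_csInf ⟨‖y‖, hmem⟩ hlb)
    rw [hInf]
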